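/- For every real number k > 1 and every A ∈ (0,1) there is a constant C > 0 such that for every measurable function f : (0,A) → ℂ one has ∫₀^A r^{-1} (-log r)^{k-2} ( ∫₀^r |f(ρ)| dρ )² dr ≤ C · ∫₀^A |f(r)|² r (-log r)^k dr (an inequality in [0, ∞]). -/

import Mathlib

open MeasureTheory
open scoped ENNReal


lemma ftc_neglog (p : ℝ) (hp : p + 1 ≠ 0) {a b : ℝ} (ha : 0 < a) (hb : b < 1)
    (hab : a ≤ b) :
    ∫⁻ x in Set.Ioo a b, ENNReal.ofReal (x⁻¹ * (-Real.log x) ^ p)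
      = ENNReal.ofReal ((p + 1)⁻¹ *
          ((-Real.log a) ^ (p + 1) - (-Real.log b) ^ (p + 1))) := by
  have hb0 : 0 < b := lt_of_lt_of_le ha hab
  have hmem : ∀ x ∈ Set.Icc a b, 0 < x ∧ x < 1 ∧ 0 < -Real.log x := by
    intro x hx
    have hx0 : 0 < x := lt_of_lt_of_le ha hx.1
    have hx1 : x < 1 := lt_of_le_of_lt hx.2 hb
    have := Real.log_neg hx0 hx1
    exact ⟨hx0, hx1, by linarith⟩
  have hcont : ContinuousOn (fun x : ℝ => x⁻¹ * (-Real.log x) ^ p) (Set.Icc a b) := by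
    intro x hx
    obtain ⟨hx0, hx1, hlx⟩ := hmem x hx
    exact ((continuousAt_inv₀ hx0.ne').mul
      (((Real.continuousAt_log hx0.ne').neg).rpow_const (Or.inl hlx.ne'))).continuousWithinAt
  have hderiv : ∀ x ∈ Set.Icc a b,
      HasDerivAt (fun y : ℝ => -((p+1)⁻¹ * (-Real.log y) ^ (p+1)))
        (x⁻¹ * (-Real.log x) ^ p) x := by
    intro x hx
    obtain ⟨hx0, hx1, hlx⟩ := hmem x hx
    have h1 : HasDerivAt (fun y : ℝ => -Real.log y) (-x⁻¹) x :=
      (Real.hasDerivAt_log hx0.ne').neg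
    have h2 := h1.rpow_const (p := p+1) (Or.inl hlx.ne')
    have h3 := (h2.const_mul (p+1)⁻¹).neg
    refine h3.congr_deriv ?_
    symm
    have : p + 1 - 1 = p := by ring
    rw [this]
    field_simp
  have hint : IntervalIntegrable (fun x : ℝ => x⁻¹ * (-Real.log x) ^ p) volume a b := by
    rw [intervalIntegrable_iff_integrableOn_Icc_of_le hab]
    exact hcont.integrableOn_Icc
  have hftc := intervalIntegral.integral_eq_sub_of_hasDerivAt
    (f := fun y : ℝ => -((p+1)⁻¹ * (-Real.log y) ^ (p+1)))
    (fun x hx => hderiv x (by rwa [Set.uIcc_of_le hab] at hx)) hint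
  have hnn : 0 ≤ᵐ[volume.restrict (Set.Ioo a b)]
      (fun x : ℝ => x⁻¹ * (-Real.log x) ^ p) := by
    filter_upwards [ae_restrict_mem measurableSet_Ioo] with x hx
    obtain ⟨hx0, hx1, hlx⟩ := hmem x (Set.Ioo_subset_Icc_self hx)
    positivity
  rw [← ofReal_integral_eq_lintegral_ofReal
      ((hcont.integrableOn_Icc).mono_set Set.Ioo_subset_Icc_self) hnn]
  congr 1
  rw [← integral_Ioc_eq_integral_Ioo, ← intervalIntegral.integral_of_le hab, hftc]
  ring



lemma lintegral_neglog_zero (p : ℝ) (hp : p + 1 < 0) {b : ℝ} (hb0 : 0 < b) (hb : b < 1) :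
    ∫⁻ x in Set.Ioo 0 b, ENNReal.ofReal (x⁻¹ * (-Real.log x) ^ p)
      ≤ ENNReal.ofReal (-(p + 1)⁻¹ * (-Real.log b) ^ (p + 1)) := by
  set h : ℝ → ℝ≥0∞ := fun x => ENNReal.ofReal (x⁻¹ * (-Real.log x) ^ p) with hh
  have hU : (⋃ n : ℕ, Set.Ioo (b / (n + 2 : ℝ)) b) = Set.Ioo 0 b := by
    ext x
    simp only [Set.mem_iUnion, Set.mem_Ioo]
    constructor
    · rintro ⟨n, h1, h2⟩
      refine ⟨lt_trans (by positivity) h1, h2⟩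
    · rintro ⟨h1, h2⟩
      obtain ⟨n, hn⟩ := exists_nat_gt (b / x)
      refine ⟨n, ?_, h2⟩
      rw [div_lt_iff₀ (by positivity)]
      rw [div_lt_iff₀ h1] at hn
      nlinarith [h1]
  have hmono : Monotone (fun n : ℕ => Set.Ioo (b / (n + 2 : ℝ)) b) := by
    intro n m hnm
    apply Set.Ioo_subset_Ioo_left
    apply div_le_div_of_nonneg_left hb0.le (by positivity)
    have : (n:ℝ) ≤ (m:ℝ) := Nat.cast_le.mpr hnm
    linarith
  calc ∫⁻ x in Set.Ioo 0 b, h x = (volume.withDensity h) (Set.Ioo 0 b) :=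
        (withDensity_apply _ measurableSet_Ioo).symm
    _ = (volume.withDensity h) (⋃ n : ℕ, Set.Ioo (b / (n + 2 : ℝ)) b) := by rw [hU]
    _ = ⨆ n : ℕ, (volume.withDensity h) (Set.Ioo (b / (n + 2 : ℝ)) b) :=
        (hmono.directed_le).measure_iUnion
    _ ≤ ENNReal.ofReal (-(p + 1)⁻¹ * (-Real.log b) ^ (p + 1)) := by
        apply iSup_le
        intro n
        rw [withDensity_apply _ measurableSet_Ioo, hh]
        have ha : 0 < b / (n + 2 : ℝ) := by positivity
        have hab : b / (n + 2 : ℝ) ≤ b := by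
          rw [div_le_iff₀ (by positivity)]
          nlinarith [hb0]
        rw [ftc_neglog p hp.ne ha hb hab]
        apply ENNReal.ofReal_le_ofReal
        have h1 : (0:ℝ) ≤ (-Real.log (b / (n + 2 : ℝ))) ^ (p + 1) := by
          apply Real.rpow_nonneg
          have : b / (n + 2 : ℝ) < 1 := lt_of_le_of_lt hab hb
          have := Real.log_neg ha this
          linarith
        have h2 : (p + 1)⁻¹ < 0 := inv_neg''.mpr hp
        nlinarith


lemma cs_lintegral (μ : Measure ℝ) (u v : ℝ → ℝ≥0∞) (hu : AEMeasurable u μ)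
    (hv : AEMeasurable v μ) :
    (∫⁻ x, u x * v x ∂μ) ^ 2 ≤ (∫⁻ x, u x ^ 2 ∂μ) * (∫⁻ x, v x ^ 2 ∂μ) := by
  have hpq : (2:ℝ).HolderConjugate 2 := Real.HolderConjugate.two_two
  have h := ENNReal.lintegral_mul_le_Lp_mul_Lq μ hpq hu hv
  have h2 : ∀ w : ℝ → ℝ≥0∞, (fun x => w x ^ (2:ℝ)) = fun x => w x ^ (2:ℕ) := by
    intro w; funext x; rw [← ENNReal.rpow_natCast]; norm_num
  calc (∫⁻ x, u x * v x ∂μ) ^ 2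
      ≤ ((∫⁻ x, u x ^ (2:ℝ) ∂μ) ^ (1/(2:ℝ)) * (∫⁻ x, v x ^ (2:ℝ) ∂μ) ^ (1/(2:ℝ))) ^ 2 := by
        rw [pow_two, pow_two]; exact mul_le_mul' h h
    _ = (∫⁻ x, u x ^ 2 ∂μ) * (∫⁻ x, v x ^ 2 ∂μ) := by
        rw [mul_pow, ← ENNReal.rpow_natCast (_ ^ (1/(2:ℝ))) 2,
          ← ENNReal.rpow_natCast (_ ^ (1/(2:ℝ))) 2, ← ENNReal.rpow_mul, ← ENNReal.rpow_mul]
        norm_num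

lemma tonelli_swap (g w : ℝ → ℝ≥0∞) (hg : Measurable g) (hw : Measurable w) {A : ℝ}
    (hA : 0 < A) :
    ∫⁻ r in Set.Ioo (0:ℝ) A, w r * ∫⁻ ρ in Set.Ioo (0:ℝ) r, g ρ
      = ∫⁻ ρ in Set.Ioo (0:ℝ) A, g ρ * ∫⁻ r in Set.Ioo ρ A, w r := by
  have hF : AEMeasurable (Function.uncurry fun r ρ => w r * (Set.Iio r).indicator g ρ)
      ((volume.restrict (Set.Ioo (0:ℝ) A)).prod (volume.restrict (Set.Ioo (0:ℝ) A))) := by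
    have heq : (Function.uncurry fun r ρ => w r * (Set.Iio r).indicator g ρ)
        = {q : ℝ × ℝ | q.2 < q.1}.indicator (fun q => w q.1 * g q.2) := by
      funext q
      by_cases h : q.2 < q.1 <;>
        simp [Function.uncurry, Set.indicator_apply, h, Set.mem_Iio]
    rw [heq]
    exact (((hw.comp measurable_fst).mul (hg.comp measurable_snd)).indicator
      (measurableSet_lt measurable_snd measurable_fst)).aemeasurable
  calc ∫⁻ r in Set.Ioo (0:ℝ) A, w r * ∫⁻ ρ in Set.Ioo (0:ℝ) r, g ρ
      = ∫⁻ r in Set.Ioo (0:ℝ) A, ∫⁻ ρ in Set.Ioo (0:ℝ) A, w r * (Set.Iio r).indicator g ρ := by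
        refine setLIntegral_congr_fun measurableSet_Ioo (fun r hr => ?_)
        rw [lintegral_const_mul (w r) (hg.indicator measurableSet_Iio),
          lintegral_indicator measurableSet_Iio _,
          Measure.restrict_restrict measurableSet_Iio]
        have hset : Set.Iio r ∩ Set.Ioo (0:ℝ) A = Set.Ioo (0:ℝ) r := by
          ext x
          simp only [Set.mem_inter_iff, Set.mem_Iio, Set.mem_Ioo]
          constructor
          · rintro ⟨h1, h2, h3⟩; exact ⟨h2, h1⟩
          · rintro ⟨h1, h2⟩; exact ⟨h2, h1, h2.trans hr.2⟩
        rw [hset]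
    _ = ∫⁻ ρ in Set.Ioo (0:ℝ) A, ∫⁻ r in Set.Ioo (0:ℝ) A, w r * (Set.Iio r).indicator g ρ :=
        lintegral_lintegral_swap hF
    _ = ∫⁻ ρ in Set.Ioo (0:ℝ) A, g ρ * ∫⁻ r in Set.Ioo ρ A, w r := by
        refine setLIntegral_congr_fun measurableSet_Ioo (fun ρ hρ => ?_)
        have heq : ∀ r : ℝ, w r * (Set.Iio r).indicator g ρ
            = g ρ * (Set.Ioi ρ).indicator w r := by
          intro r
          by_cases h : ρ < r <;>
            simp [Set.indicator_apply, h, Set.mem_Iio, Set.mem_Ioi, mul_comm]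
        simp_rw [heq]
        rw [lintegral_const_mul (g ρ) (hw.indicator measurableSet_Ioi),
          lintegral_indicator measurableSet_Ioi _,
          Measure.restrict_restrict measurableSet_Ioi]
        have hset : Set.Ioi ρ ∩ Set.Ioo (0:ℝ) A = Set.Ioo ρ A := by
          ext x
          simp only [Set.mem_inter_iff, Set.mem_Ioi, Set.mem_Ioo]
          constructor
          · rintro ⟨h1, h2, h3⟩; exact ⟨h1, h3⟩
          · rintro ⟨h1, h2⟩; exact ⟨h1, hρ.1.trans h1, h2⟩
        rw [hset]

/-- Weighted Hardy-type inequality, zero Fourier mode, weight exponent `k > 1`: for every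
`A ∈ (0,1)` there is `C > 0` such that for every measurable `f : (0,A) → ℂ`,
`∫₀^A r⁻¹ (-log r)^(k-2) (∫₀^r |f ρ| dρ)² dr ≤ C ∫₀^A |f r|² r (-log r)^k dr`
in `[0,∞]`. -/
theorem hardy_weighted_zero_mode_k_gt_one (k : ℝ) (hk : 1 < k)
    (A : ℝ) (hA0 : 0 < A) (hA1 : A < 1) :
    ∃ C : ℝ, 0 < C ∧ ∀ f : ℝ → ℂ, Measurable f →
      ∫⁻ r in Set.Ioo (0 : ℝ) A,
          ENNReal.ofReal (r⁻¹ * (-Real.log r) ^ (k - 2)) *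
            (∫⁻ ρ in Set.Ioo (0 : ℝ) r, ENNReal.ofReal (‖f ρ‖)) ^ 2
        ≤ ENNReal.ofReal C *
          ∫⁻ r in Set.Ioo (0 : ℝ) A,
            ENNReal.ofReal (‖f r‖ ^ 2 * r * (-Real.log r) ^ k) := by
  set ε : ℝ := (k - 1) / 2 with hεdef
  set β : ℝ := (k + 1) / 2 with hβdef
  have hε : 0 < ε := by rw [hεdef]; linarith
  have hβ1 : 1 < β := by rw [hβdef]; linarith
  refine ⟨(ε * ε)⁻¹, by positivity, ?_⟩
  intro f hf
  have hfa : Measurable fun ρ => ‖f ρ‖ :=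
    hf.norm
  set g : ℝ → ℝ≥0∞ :=
    fun ρ => ENNReal.ofReal (‖f ρ‖ ^ 2 * ρ * (-Real.log ρ) ^ β) with hgdef
  set w : ℝ → ℝ≥0∞ := fun r => ENNReal.ofReal (r⁻¹ * (-Real.log r) ^ (ε - 1)) with hwdef
  have hgm : Measurable g :=
    ENNReal.measurable_ofReal.comp (((hfa.pow_const 2).mul measurable_id).mul
      ((Real.measurable_log.neg.pow measurable_const)))
  have hwm : Measurable w :=
    ENNReal.measurable_ofReal.comp (measurable_inv.mul (Real.measurable_log.neg.pow measurable_const))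
  -- positivity of -log on (0,1)
  have hlog : ∀ x : ℝ, 0 < x → x < 1 → 0 < -Real.log x := by
    intro x h0 h1; have := Real.log_neg h0 h1; linarith
  -- Step A : Cauchy-Schwarz
  have stepA : ∀ r ∈ Set.Ioo (0:ℝ) A,
      (∫⁻ ρ in Set.Ioo (0 : ℝ) r, ENNReal.ofReal (‖f ρ‖)) ^ 2
        ≤ (∫⁻ ρ in Set.Ioo (0:ℝ) r, g ρ) *
            ENNReal.ofReal (ε⁻¹ * (-Real.log r) ^ (1 - β)) := by
    intro r hr
    have hr1 : r < 1 := hr.2.trans hA1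
    set u : ℝ → ℝ≥0∞ := fun ρ =>
      ENNReal.ofReal (‖f ρ‖ * (ρ ^ (1/2:ℝ) * (-Real.log ρ) ^ (β/2))) with hudef
    set v : ℝ → ℝ≥0∞ := fun ρ =>
      ENNReal.ofReal ((ρ ^ (1/2:ℝ) * (-Real.log ρ) ^ (β/2))⁻¹) with hvdef
    have hum : Measurable u := ENNReal.measurable_ofReal.comp
      (hfa.mul ((measurable_id.pow measurable_const).mul (Real.measurable_log.neg.pow measurable_const)))
    have hvm : Measurable v := ENNReal.measurable_ofReal.comp
      ((measurable_id.pow measurable_const).mul (Real.measurable_log.neg.pow measurable_const)).inv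
    have hsq : ∀ x : ℝ, 0 ≤ x → ∀ p : ℝ, (x ^ p) ^ (2:ℕ) = x ^ (p * 2) := by
      intro x hx p
      rw [← Real.rpow_natCast (x ^ p) 2, ← Real.rpow_mul hx]
      norm_num
    have h1 : ∫⁻ ρ in Set.Ioo (0 : ℝ) r, ENNReal.ofReal (‖f ρ‖)
        = ∫⁻ ρ in Set.Ioo (0 : ℝ) r, u ρ * v ρ := by
      refine setLIntegral_congr_fun measurableSet_Ioo (fun ρ hρ => ?_)
      have hρ1 : ρ < 1 := hρ.2.trans hr1
      have hl := hlog ρ hρ.1 hρ1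
      have ha : 0 < ρ ^ (1/2:ℝ) * (-Real.log ρ) ^ (β/2) :=
        mul_pos (Real.rpow_pos_of_pos hρ.1 _) (Real.rpow_pos_of_pos hl _)
      have habs : 0 ≤ ‖f ρ‖ := norm_nonneg _
      rw [hudef, hvdef]
      dsimp only
      rw [← ENNReal.ofReal_mul (mul_nonneg habs ha.le), mul_inv_cancel_right₀ ha.ne']
    have h2 : ∫⁻ ρ in Set.Ioo (0:ℝ) r, u ρ ^ 2 = ∫⁻ ρ in Set.Ioo (0:ℝ) r, g ρ := by
      refine setLIntegral_congr_fun measurableSet_Ioo (fun ρ hρ => ?_)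
      have hρ1 : ρ < 1 := hρ.2.trans hr1
      have hl := hlog ρ hρ.1 hρ1
      have habs : 0 ≤ ‖f ρ‖ := norm_nonneg _
      have ha : (0:ℝ) ≤ ρ ^ (1/2:ℝ) * (-Real.log ρ) ^ (β/2) :=
        mul_nonneg (Real.rpow_nonneg hρ.1.le _) (Real.rpow_nonneg hl.le _)
      rw [hudef, hgdef]
      dsimp only
      rw [← ENNReal.ofReal_pow (mul_nonneg habs ha)]
      congr 1
      rw [mul_pow, mul_pow, hsq ρ hρ.1.le, hsq (-Real.log ρ) hl.le,
        show (1/2*2:ℝ) = 1 from by norm_num, show (β/2*2:ℝ) = β from by ring,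
        Real.rpow_one]
      ring
    have h3 : ∫⁻ ρ in Set.Ioo (0:ℝ) r, v ρ ^ 2
        ≤ ENNReal.ofReal (ε⁻¹ * (-Real.log r) ^ (1 - β)) := by
      have heq : ∫⁻ ρ in Set.Ioo (0:ℝ) r, v ρ ^ 2
          = ∫⁻ ρ in Set.Ioo (0:ℝ) r, ENNReal.ofReal (ρ⁻¹ * (-Real.log ρ) ^ (-β)) := by
        refine setLIntegral_congr_fun measurableSet_Ioo (fun ρ hρ => ?_)
        have hρ1 : ρ < 1 := hρ.2.trans hr1
        have hl := hlog ρ hρ.1 hρ1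
        have ha : (0:ℝ) ≤ ρ ^ (1/2:ℝ) * (-Real.log ρ) ^ (β/2) :=
          mul_nonneg (Real.rpow_nonneg hρ.1.le _) (Real.rpow_nonneg hl.le _)
        rw [hvdef]
        dsimp only
        rw [← ENNReal.ofReal_pow (inv_nonneg.mpr ha)]
        congr 1
        rw [inv_pow, mul_pow, hsq ρ hρ.1.le, hsq (-Real.log ρ) hl.le,
          show (1/2*2:ℝ) = 1 from by norm_num, show (β/2*2:ℝ) = β from by ring,
          Real.rpow_one, Real.rpow_neg hl.le, mul_inv]
      rw [heq]
      have hb := lintegral_neglog_zero (-β) (by linarith) hr.1 hr1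
      refine hb.trans (le_of_eq ?_)
      congr 1
      rw [show (-β + 1 : ℝ) = 1 - β from by ring,
        show -((1:ℝ) - β)⁻¹ = ε⁻¹ from by
          rw [show ((1:ℝ) - β) = -ε from by rw [hεdef, hβdef]; ring, inv_neg, neg_neg]]
    calc (∫⁻ ρ in Set.Ioo (0 : ℝ) r, ENNReal.ofReal (‖f ρ‖)) ^ 2
        = (∫⁻ ρ in Set.Ioo (0 : ℝ) r, u ρ * v ρ) ^ 2 := by rw [h1]
      _ ≤ (∫⁻ ρ in Set.Ioo (0:ℝ) r, u ρ ^ 2) * (∫⁻ ρ in Set.Ioo (0:ℝ) r, v ρ ^ 2) :=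
          cs_lintegral _ u v hum.aemeasurable hvm.aemeasurable
      _ ≤ (∫⁻ ρ in Set.Ioo (0:ℝ) r, g ρ) * ENNReal.ofReal (ε⁻¹ * (-Real.log r) ^ (1 - β)) := by
          rw [h2]; exact mul_le_mul_right h3 _
  -- main calc
  calc ∫⁻ r in Set.Ioo (0 : ℝ) A,
        ENNReal.ofReal (r⁻¹ * (-Real.log r) ^ (k - 2)) *
          (∫⁻ ρ in Set.Ioo (0 : ℝ) r, ENNReal.ofReal (‖f ρ‖)) ^ 2
      ≤ ∫⁻ r in Set.Ioo (0 : ℝ) A,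
          ENNReal.ofReal ε⁻¹ * (w r * ∫⁻ ρ in Set.Ioo (0:ℝ) r, g ρ) := by
        refine lintegral_mono_ae ?_
        filter_upwards [ae_restrict_mem measurableSet_Ioo] with r hr
        have hr1 : r < 1 := hr.2.trans hA1
        have hl := hlog r hr.1 hr1
        calc ENNReal.ofReal (r⁻¹ * (-Real.log r) ^ (k - 2)) *
              (∫⁻ ρ in Set.Ioo (0 : ℝ) r, ENNReal.ofReal (‖f ρ‖)) ^ 2
            ≤ ENNReal.ofReal (r⁻¹ * (-Real.log r) ^ (k - 2)) *
              ((∫⁻ ρ in Set.Ioo (0:ℝ) r, g ρ) *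
                ENNReal.ofReal (ε⁻¹ * (-Real.log r) ^ (1 - β))) :=
              mul_le_mul_right (stepA r hr) _
          _ = ENNReal.ofReal ε⁻¹ * (w r * ∫⁻ ρ in Set.Ioo (0:ℝ) r, g ρ) := by
              have hxc : ENNReal.ofReal (r⁻¹ * (-Real.log r) ^ (k - 2)) *
                  ENNReal.ofReal (ε⁻¹ * (-Real.log r) ^ (1 - β))
                    = ENNReal.ofReal ε⁻¹ * w r := by
                rw [hwdef]
                dsimp only
                rw [← ENNReal.ofReal_mul
                    (mul_nonneg (inv_nonneg.mpr hr.1.le) (Real.rpow_nonneg hl.le _)),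
                  ← ENNReal.ofReal_mul (inv_nonneg.mpr hε.le)]
                congr 1
                rw [show (k - 2 : ℝ) = (ε - 1) + -(1 - β) from by rw [hεdef, hβdef]; ring,
                  Real.rpow_add hl, Real.rpow_neg hl.le (1 - β)]
                have h10 : ((-Real.log r) ^ ((1:ℝ) - β)) ≠ 0 :=
                  (Real.rpow_pos_of_pos hl _).ne'
                linear_combination
                  (r⁻¹ * (-Real.log r) ^ (ε - 1) * ε⁻¹) * (inv_mul_cancel₀ h10)
              rw [mul_comm (∫⁻ ρ in Set.Ioo (0:ℝ) r, g ρ) _, ← mul_assoc, hxc, mul_assoc]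
    _ = ENNReal.ofReal ε⁻¹ *
          ∫⁻ r in Set.Ioo (0 : ℝ) A, w r * ∫⁻ ρ in Set.Ioo (0:ℝ) r, g ρ :=
        lintegral_const_mul' _ _ ENNReal.ofReal_ne_top
    _ = ENNReal.ofReal ε⁻¹ *
          ∫⁻ ρ in Set.Ioo (0 : ℝ) A, g ρ * ∫⁻ r in Set.Ioo ρ A, w r := by
        rw [tonelli_swap g w hgm hwm hA0]
    _ ≤ ENNReal.ofReal ε⁻¹ * ∫⁻ ρ in Set.Ioo (0 : ℝ) A,
          ENNReal.ofReal ε⁻¹ *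
            ENNReal.ofReal (‖f ρ‖ ^ 2 * ρ * (-Real.log ρ) ^ k) := by
        refine mul_le_mul_right (lintegral_mono_ae ?_) _
        filter_upwards [ae_restrict_mem measurableSet_Ioo] with ρ hρ
        have hρ1 : ρ < 1 := hρ.2.trans hA1
        have hl := hlog ρ hρ.1 hρ1
        have hbound : ∫⁻ r in Set.Ioo ρ A, w r ≤ ENNReal.ofReal (ε⁻¹ * (-Real.log ρ) ^ ε) := by
          rw [hwdef]
          have := ftc_neglog (ε - 1) (by rw [show (ε - 1 + 1 : ℝ) = ε from by ring]; exact hε.ne')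
            hρ.1 hA1 hρ.2.le
          rw [show (ε - 1 + 1 : ℝ) = ε from by ring] at this
          rw [this]
          apply ENNReal.ofReal_le_ofReal
          have hLA : (0:ℝ) ≤ (-Real.log A) ^ ε := Real.rpow_nonneg (hlog A hA0 hA1).le _
          have hinv : (0:ℝ) < ε⁻¹ := by positivity
          nlinarith
        calc g ρ * ∫⁻ r in Set.Ioo ρ A, w r
            ≤ g ρ * ENNReal.ofReal (ε⁻¹ * (-Real.log ρ) ^ ε) := mul_le_mul_right hbound _
          _ = ENNReal.ofReal ε⁻¹ *
                ENNReal.ofReal (‖f ρ‖ ^ 2 * ρ * (-Real.log ρ) ^ k) := by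
              have habs : 0 ≤ ‖f ρ‖ := norm_nonneg _
              have hg0 : (0:ℝ) ≤ ‖f ρ‖ ^ 2 * ρ * (-Real.log ρ) ^ β :=
                mul_nonneg (mul_nonneg (pow_nonneg habs 2) hρ.1.le)
                  (Real.rpow_nonneg hl.le _)
              rw [hgdef]
              dsimp only
              rw [← ENNReal.ofReal_mul hg0, ← ENNReal.ofReal_mul (by positivity)]
              congr 1
              rw [show (k : ℝ) = β + ε from by rw [hεdef, hβdef]; ring, Real.rpow_add hl]
              ring
    _ = ENNReal.ofReal (ε * ε)⁻¹ *
          ∫⁻ r in Set.Ioo (0 : ℝ) A,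
            ENNReal.ofReal (‖f r‖ ^ 2 * r * (-Real.log r) ^ k) := by
        rw [lintegral_const_mul' _ _ ENNReal.ofReal_ne_top, ← mul_assoc,
          ← ENNReal.ofReal_mul (by positivity), mul_inv]
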